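/- arXiv:1009.1510 — 2 statements merged into one kernel-verified Lean document; each statement's English description precedes it below -/
import Mathlib

section
/- The Fourier transform of the Cauchy distribution with location parameter a and scale b > 0 equals e^{iaz - b|z|} for all real z. -/
open MeasureTheory Complex

/-- The Cauchy distribution with location `a` and scale `b`. -/
noncomputable def cauchyMeasure (a b : ℝ) : Measure ℝ :=
  volume.withDensity (fun x => ENNReal.ofReal ((1 / Real.pi) * b / ((x - a) ^ 2 + b ^ 2)))

/-- The Fourier transform of a measure on `ℝ`. -/
noncomputable def fourierTr (μ : Measure ℝ) (z : ℝ) : ℂ :=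
  ∫ x, Complex.exp (Complex.I * x * z) ∂μ

open Real Set Filter
open scoped FourierTransform Topology

lemma integral_cexp_neg_Ioi {c : ℂ} (hc : 0 < c.re) :
    ∫ x in Ioi (0:ℝ), Complex.exp (-(c * x)) = 1 / c := by
  have hc0 : c ≠ 0 := fun h => by simp [h] at hc
  have hint : IntegrableOn (fun x : ℝ => Complex.exp (-(c * x))) (Ioi 0) := by
    refine (exp_neg_integrableOn_Ioi 0 hc).mono' ?_ ?_
    · exact (Complex.continuous_exp.comp (by continuity)).aestronglyMeasurable
    · filter_upwards with x
      simp [Complex.norm_exp]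
  have key : Tendsto (fun T : ℝ => ∫ x in (0:ℝ)..T, Complex.exp (-(c * x))) atTop (𝓝 (1/c)) := by
    have heq : ∀ T : ℝ, (∫ x in (0:ℝ)..T, Complex.exp (-(c * x)))
        = (Complex.exp (-c * T) - 1) / (-c) := by
      intro T
      simpa using integral_exp_mul_complex (a := 0) (b := T) (c := -c) (neg_ne_zero.2 hc0)
    simp_rw [heq]
    have h0 : Tendsto (fun T : ℝ => Complex.exp (-c * T)) atTop (𝓝 0) := by
      rw [tendsto_zero_iff_norm_tendsto_zero]
      have : ∀ T : ℝ, ‖Complex.exp (-c * T)‖ = Real.exp (-(c.re) * T) := by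
        intro T; simp [Complex.norm_exp]
      simp_rw [this]
      exact Real.tendsto_exp_atBot.comp (tendsto_id.const_mul_atTop_of_neg (neg_neg_iff_pos.2 hc))
    have := (h0.sub_const 1).div_const (-c)
    simpa [neg_div, div_neg] using this
  exact tendsto_nhds_unique (intervalIntegral_tendsto_integral_Ioi 0 hint tendsto_id) key

lemma twoside_int {b : ℝ} (hb : 0 < b) (t : ℝ) :
    ∫ x : ℝ, Complex.exp (t * x * Complex.I) * Real.exp (-(b * |x|))
      = 2 * b / (b ^ 2 + t ^ 2) := by
  set f : ℝ → ℂ := fun x => Complex.exp (t * x * Complex.I) * Real.exp (-(b * |x|)) with hf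
  have hfx : ∀ x : ℝ, f x = Complex.exp ((t * x : ℝ) * Complex.I + (-(b * |x|) : ℝ)) := by
    intro x
    simp only [hf]
    rw [Complex.exp_add, ← Complex.ofReal_exp]
    push_cast
    ring
  have h1 : (b : ℂ) - t * Complex.I ≠ 0 := by
    intro h
    have := congrArg Complex.re h
    simp at this
    exact hb.ne' this
  have h2 : (b : ℂ) + t * Complex.I ≠ 0 := by
    intro h
    have := congrArg Complex.re h
    simp at this
    exact hb.ne' this
  have hpos : ∀ x : ℝ, 0 < x → f x = Complex.exp (-((((b:ℂ) - t * Complex.I)) * x)) := by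
    intro x hx
    rw [hfx, abs_of_pos hx]
    congr 1
    push_cast
    ring
  have hneg : ∀ x : ℝ, 0 < x → f (-x) = Complex.exp (-((((b:ℂ) + t * Complex.I)) * x)) := by
    intro x hx
    rw [hfx, abs_neg, abs_of_pos hx]
    congr 1
    push_cast
    ring
  have hre1 : (0:ℝ) < ((b:ℂ) - t * Complex.I).re := by simpa using hb
  have hre2 : (0:ℝ) < ((b:ℂ) + t * Complex.I).re := by simpa using hb
  have hint : Integrable f := by
    have hmeas : AEStronglyMeasurable f volume := by
      apply Continuous.aestronglyMeasurable
      apply Continuous.mul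
      · exact Complex.continuous_exp.comp (by continuity)
      · exact Complex.continuous_ofReal.comp (Real.continuous_exp.comp (by continuity))
    have hbd : Integrable (fun x : ℝ => Real.exp (-(b * |x|))) := by
      have h₁ : IntegrableOn (fun x : ℝ => Real.exp (-(b * |x|))) (Ioi 0) := by
        refine (exp_neg_integrableOn_Ioi 0 hb).congr_fun ?_ measurableSet_Ioi
        intro x hx
        simp [abs_of_pos (mem_Ioi.mp hx), neg_mul]
      have h₂ : IntegrableOn (fun x : ℝ => Real.exp (-(b * |x|))) (Iic 0) := by
        rw [← Measure.map_neg_eq_self (volume : Measure ℝ)]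
        have m : MeasurableEmbedding fun x : ℝ => -x := (Homeomorph.neg ℝ).measurableEmbedding
        rw [m.integrableOn_map_iff]
        simp_rw [Function.comp_def, abs_neg, neg_preimage, neg_Iic, neg_zero]
        exact Iff.mpr integrableOn_Ici_iff_integrableOn_Ioi h₁
      have := h₂.union h₁
      rwa [Iic_union_Ioi, integrableOn_univ] at this
    refine hbd.mono' hmeas ?_
    filter_upwards with x
    rw [hfx]
    simp [Complex.norm_exp]
  have split : ∫ x : ℝ, f x = (∫ x in Iic (0:ℝ), f x) + ∫ x in Ioi (0:ℝ), f x := by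
    rw [← integral_add_compl measurableSet_Iic hint, compl_Iic]
  have hIic : ∫ x in Iic (0:ℝ), f x = 1 / ((b:ℂ) + t * Complex.I) := by
    rw [show (0:ℝ) = -0 by ring, ← integral_comp_neg_Ioi]
    rw [setIntegral_congr_fun measurableSet_Ioi (fun x hx => hneg x hx)]
    exact integral_cexp_neg_Ioi hre2
  have hIoi : ∫ x in Ioi (0:ℝ), f x = 1 / ((b:ℂ) - t * Complex.I) := by
    rw [setIntegral_congr_fun measurableSet_Ioi (fun x hx => hpos x hx)]
    exact integral_cexp_neg_Ioi hre1
  rw [show (∫ x : ℝ, Complex.exp (t * x * Complex.I) * Real.exp (-(b * |x|))) = ∫ x : ℝ, f x from rfl,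
    split, hIic, hIoi, div_add_div _ _ h2 h1]
  have hprod : ((b:ℂ) + t * Complex.I) * ((b:ℂ) - t * Complex.I) = (b:ℂ)^2 + (t:ℂ)^2 := by
    ring_nf
    rw [Complex.I_sq]
    ring
  rw [hprod]
  push_cast
  ring_nf

lemma int_exp_abs {b : ℝ} (hb : 0 < b) : Integrable (fun x : ℝ => Real.exp (-(b * |x|))) := by
  have h₁ : IntegrableOn (fun x : ℝ => Real.exp (-(b * |x|))) (Ioi 0) := by
    refine (exp_neg_integrableOn_Ioi 0 hb).congr_fun ?_ measurableSet_Ioi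
    intro x hx
    simp [abs_of_pos (mem_Ioi.mp hx), neg_mul]
  have h₂ : IntegrableOn (fun x : ℝ => Real.exp (-(b * |x|))) (Iic 0) := by
    rw [← Measure.map_neg_eq_self (volume : Measure ℝ)]
    have m : MeasurableEmbedding fun x : ℝ => -x := (Homeomorph.neg ℝ).measurableEmbedding
    rw [m.integrableOn_map_iff]
    simp_rw [Function.comp_def, abs_neg, neg_preimage, neg_Iic, neg_zero]
    exact Iff.mpr integrableOn_Ici_iff_integrableOn_Ioi h₁
  have := h₂.union h₁
  rwa [Iic_union_Ioi, integrableOn_univ] at this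

lemma fourier_exp_abs {b : ℝ} (hb : 0 < b) (ξ : ℝ) :
    𝓕 (fun x : ℝ => (Real.exp (-(b * |x|)) : ℂ)) ξ
      = ((2 * b / (b ^ 2 + (2 * π * ξ) ^ 2) : ℝ) : ℂ) := by
  rw [Real.fourier_real_eq_integral_exp_smul]
  have : ∀ v : ℝ, Complex.exp (↑(-2 * π * v * ξ) * Complex.I)
        • (Real.exp (-(b * |v|)) : ℂ)
      = Complex.exp ((-2 * π * ξ : ℝ) * v * Complex.I) * Real.exp (-(b * |v|)) := by
    intro v
    rw [smul_eq_mul]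
    congr 2
    push_cast
    ring
  rw [funext this, twoside_int hb (-2 * π * ξ)]
  push_cast
  ring_nf

lemma key_inversion {b : ℝ} (hb : 0 < b) (z : ℝ) :
    ∫ ξ : ℝ, Complex.exp ((2 * π * ξ * z : ℝ) * Complex.I)
        * ((2 * b / (b ^ 2 + (2 * π * ξ) ^ 2) : ℝ) : ℂ)
      = ((Real.exp (-(b * |z|)) : ℝ) : ℂ) := by
  set g : ℝ → ℂ := fun x => (Real.exp (-(b * |x|)) : ℂ) with hg
  have hcont : Continuous g := by
    apply Complex.continuous_ofReal.comp
    exact Real.continuous_exp.comp (by continuity)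
  have hint : Integrable g := (int_exp_abs hb).ofReal
  have h'int : Integrable (𝓕 g) := by
    have heq : 𝓕 g = fun ξ : ℝ => ((2 * b / (b ^ 2 + (2 * π * ξ) ^ 2) : ℝ) : ℂ) :=
      funext fun ξ => fourier_exp_abs hb ξ
    rw [heq]
    apply Integrable.ofReal
    have hR : (2 * π / b : ℝ) ≠ 0 := by positivity
    have := (integrable_inv_one_add_sq.comp_mul_left' hR).const_mul (2 / b)
    refine this.congr ?_
    filter_upwards with x
    have hb0 : (b:ℝ) ^ 2 ≠ 0 := by positivity
    rw [show (1 + (2 * π / b * x) ^ 2 : ℝ) = (b ^ 2 + (2 * π * x) ^ 2) / b ^ 2 by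
      field_simp, inv_div]
    have hbne : (b:ℝ) ≠ 0 := hb.ne'
    rw [div_mul_div_comm, show (2 * b ^ 2 : ℝ) = b * (2 * b) by ring,
      mul_div_mul_left _ _ hbne]
    exact div_eq_mul_inv _ _
  have hinv := Continuous.fourierInv_fourier_eq hcont hint h'int
  have h1 : 𝓕⁻ (𝓕 g) z = g z := by rw [hinv]
  rw [Real.fourierInv_eq_fourier_neg,
    Real.fourier_real_eq_integral_exp_smul] at h1
  rw [show ((Real.exp (-(b * |z|)) : ℝ) : ℂ) = g z from rfl, ← h1]
  congr 1
  funext ξ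
  rw [fourier_exp_abs hb ξ, smul_eq_mul]
  congr 2
  push_cast
  ring

lemma core_int {b : ℝ} (hb : 0 < b) (z : ℝ) :
    ∫ x : ℝ, ((1 / Real.pi * b / (x ^ 2 + b ^ 2) : ℝ) : ℂ)
        * Complex.exp (Complex.I * x * z)
      = ((Real.exp (-(b * |z|)) : ℝ) : ℂ) := by
  have hπ : (π : ℝ) ≠ 0 := Real.pi_ne_zero
  set H : ℝ → ℂ := fun u => Complex.exp ((u * z : ℝ) * Complex.I)
      * ((2 * b / (b ^ 2 + u ^ 2) : ℝ) : ℂ) with hH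
  have h2 : ∫ u : ℝ, H (2 * π * u) = |(2 * π : ℝ)⁻¹| • ∫ u : ℝ, H u :=
    MeasureTheory.Measure.integral_comp_mul_left H (2 * π)
  have h3 : ∫ u : ℝ, H (2 * π * u) = ((Real.exp (-(b * |z|)) : ℝ) : ℂ) := by
    rw [← key_inversion hb z]
  have h4 : ∫ u : ℝ, H u = ((2 * π : ℝ) : ℂ) * ((Real.exp (-(b * |z|)) : ℝ) : ℂ) := by
    rw [h3] at h2
    have habs : |(2 * π : ℝ)⁻¹| = (2 * π)⁻¹ := abs_of_pos (by positivity)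
    rw [habs, Complex.real_smul, Complex.ofReal_inv] at h2
    have hc : ((2 * π : ℝ) : ℂ) ≠ 0 := by
      simpa using Complex.ofReal_ne_zero.mpr (show (2 * π : ℝ) ≠ 0 by positivity)
    exact (inv_mul_eq_iff_eq_mul₀ hc).mp h2.symm
  have hfun : (fun x : ℝ => ((1 / Real.pi * b / (x ^ 2 + b ^ 2) : ℝ) : ℂ)
        * Complex.exp (Complex.I * x * z))
      = fun x => (((2 * π : ℝ)⁻¹ : ℝ) : ℂ) * H x := by
    funext x
    rw [hH]
    have harg : Complex.I * x * z = ((x * z : ℝ) : ℂ) * Complex.I := by push_cast; ring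
    rw [harg]
    have hden : (x : ℝ) ^ 2 + b ^ 2 ≠ 0 := by positivity
    have hden' : (b : ℝ) ^ 2 + x ^ 2 ≠ 0 := by positivity
    rw [show (1 / Real.pi * b / (x ^ 2 + b ^ 2) : ℝ)
        = (2 * π)⁻¹ * (2 * b / (b ^ 2 + x ^ 2)) by field_simp; ring]
    push_cast
    ring
  rw [hfun, MeasureTheory.integral_const_mul, h4, ← mul_assoc, ← Complex.ofReal_mul,
    inv_mul_cancel₀ (show (2 * π : ℝ) ≠ 0 by positivity)]
  simp


/-- The Fourier transform of the Cauchy distribution equals `e^{iaz - b|z|}`. -/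
theorem fourier_cauchy (a b : ℝ) (hb : 0 < b) (z : ℝ) :
    fourierTr (cauchyMeasure a b) z =
      Complex.exp (Complex.I * a * z - b * |z|) := by
  have hπpos : (0:ℝ) < π := Real.pi_pos
  set ρ : ℝ → ℝ := fun x => 1 / Real.pi * b / ((x - a) ^ 2 + b ^ 2) with hρ
  have hρnn : ∀ x, 0 ≤ ρ x := fun x => by
    have : (0:ℝ) < (x - a) ^ 2 + b ^ 2 := by positivity
    positivity
  have hρmeas : Measurable fun x => (ρ x).toNNReal := by
    apply Measurable.real_toNNReal
    fun_prop
  have hμ : cauchyMeasure a b = volume.withDensity (fun x => ((ρ x).toNNReal : ENNReal)) := rfl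
  rw [fourierTr, hμ, integral_withDensity_eq_integral_smul hρmeas]
  have hsm : ∀ x : ℝ, (ρ x).toNNReal • Complex.exp (Complex.I * x * z)
      = ((ρ x : ℝ) : ℂ) * Complex.exp (Complex.I * x * z) := by
    intro x
    rw [NNReal.smul_def, Real.coe_toNNReal _ (hρnn x), Complex.real_smul]
  simp only [hsm]
  rw [← MeasureTheory.integral_add_right_eq_self
    (fun x : ℝ => ((ρ x : ℝ) : ℂ) * Complex.exp (Complex.I * x * z)) a]
  trans (Complex.exp (Complex.I * a * z)
      * ∫ x : ℝ, ((1 / Real.pi * b / (x ^ 2 + b ^ 2) : ℝ) : ℂ)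
          * Complex.exp (Complex.I * x * z))
  · rw [← MeasureTheory.integral_const_mul]
    apply MeasureTheory.integral_congr_ae
    filter_upwards with x
    rw [hρ]
    simp only []
    rw [show (x + a - a : ℝ) = x by ring]
    push_cast
    rw [show Complex.I * ((x:ℂ) + a) * z = Complex.I * x * z + Complex.I * a * z by ring,
      Complex.exp_add]
    ring
  · rw [core_int hb z, Complex.ofReal_exp, ← Complex.exp_add]
    congr 1
    push_cast
    ring
end

section
/- If a complex sequence (mₙ)_{n≥0} with m₀ = 1 satisfies |mₙ| ≤ Rⁿ for all n, then the N-fold monotone convolution power sequence, defined recursively via mₙ(μ^{▷(N+1)}) = ∑_{k=0}^{n} ∑_{j₀+⋯+j_k=n-k} m_k · m_{j₀}(μ^{▷N})⋯m_{j_k}(μ^{▷N}) with μ^{▷1} = μ, satisfies |mₙ(μ^{▷N})| ≤ (NR)ⁿ for all n, N ≥ 1. -/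
open Finset

/-- The monotone convolution of two moment sequences:
`mₙ(ρ ▷ σ) = ∑_{k=0}^{n} ∑_{j₀+⋯+j_k = n-k} m_k(ρ) m_{j₀}(σ)⋯m_{j_k}(σ)`. -/
noncomputable def monConv (mρ mσ : ℕ → ℂ) (n : ℕ) : ℂ :=
  ∑ k ∈ Finset.range (n + 1),
    ∑ j ∈ Finset.Nat.antidiagonalTuple (k + 1) (n - k),
      mρ k * ∏ l : Fin (k + 1), mσ (j l)

/-- `N`-fold monotone convolution power of a moment sequence (`N = 0` gives the moment
sequence of `δ₀`, so that `monPow m 1 = m`). -/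
noncomputable def monPow (m : ℕ → ℂ) : ℕ → ℕ → ℂ
  | 0 => fun n => if n = 0 then 1 else 0
  | (N + 1) => monConv m (monPow m N)

lemma length_antidiagonalTuple_list (k : ℕ) :
    ∀ n : ℕ, (List.Nat.antidiagonalTuple (k + 1) n).length = (n + k).choose k := by
  induction k with
  | zero => intro n; rw [List.Nat.antidiagonalTuple_one]; simp
  | succ k ih =>
    intro n
    have hunfold : List.Nat.antidiagonalTuple (k + 1 + 1) n =
        (List.Nat.antidiagonal n).flatMap fun ni =>
          (List.Nat.antidiagonalTuple (k + 1) ni.2).map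
            fun x => Fin.cons (α := fun _ : Fin (k + 1 + 1) => ℕ) ni.1 x := rfl
    rw [hunfold, List.length_flatMap, List.Nat.antidiagonal, List.map_map]
    have hsum : ∀ G : ℕ → ℕ, (List.map G (List.range (n + 1))).sum
        = ∑ i ∈ Finset.range (n + 1), G i := fun G => rfl
    rw [hsum]
    have : ∀ i ∈ Finset.range (n + 1),
        ((List.length ∘ fun ni : ℕ × ℕ =>
            List.map (fun x => Fin.cons (α := fun _ : Fin (k + 1 + 1) => ℕ) ni.1 x)
              (List.Nat.antidiagonalTuple (k + 1) ni.2)) ∘ fun i => (i, n - i)) i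
          = (n - i + k).choose k := by
      intro i _
      simp only [Function.comp_apply, List.length_map]
      exact ih (n - i)
    refine (Finset.sum_congr rfl this).trans ?_
    calc ∑ x ∈ Finset.range (n + 1), (n - x + k).choose k
        = ∑ x ∈ Finset.range (n + 1), (x + k).choose k := by
          rw [← Finset.sum_range_reflect (fun i => (i + k).choose k) (n + 1)]
          apply Finset.sum_congr rfl
          intro i hi
          simp only [Finset.mem_range] at hi
          congr 2
      _ = (n + (k + 1)).choose (k + 1) := by
          rw [Nat.sum_range_add_choose n k, Nat.add_assoc]

lemma card_antidiagonalTuple (k n : ℕ) :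
    (Finset.Nat.antidiagonalTuple (k + 1) n).card = (n + k).choose k := by
  have : (Finset.Nat.antidiagonalTuple (k + 1) n).card
      = (List.Nat.antidiagonalTuple (k + 1) n).length := rfl
  rw [this]
  exact length_antidiagonalTuple_list k n

lemma monConv_bound (m σ : ℕ → ℂ) (R S : ℝ) (hR : 0 ≤ R) (hS : 0 ≤ S)
    (hm : ∀ n : ℕ, ‖m n‖ ≤ R ^ n)
    (hσ : ∀ n : ℕ, ‖σ n‖ ≤ S ^ n) (n : ℕ) :
    ‖monConv m σ n‖ ≤ (R + S) ^ n := by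
  have key : ∀ k ∈ Finset.range (n + 1),
      ‖∑ j ∈ Finset.Nat.antidiagonalTuple (k + 1) (n - k),
        m k * ∏ l : Fin (k + 1), σ (j l)‖ ≤ (n.choose k : ℝ) * (R ^ k * S ^ (n - k)) := by
    intro k hk
    simp only [Finset.mem_range] at hk
    calc ‖∑ j ∈ Finset.Nat.antidiagonalTuple (k + 1) (n - k),
          m k * ∏ l : Fin (k + 1), σ (j l)‖
        ≤ ∑ j ∈ Finset.Nat.antidiagonalTuple (k + 1) (n - k),
            ‖m k * ∏ l : Fin (k + 1), σ (j l)‖ := by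
          exact norm_sum_le _ _
      _ ≤ ∑ _j ∈ Finset.Nat.antidiagonalTuple (k + 1) (n - k), R ^ k * S ^ (n - k) := by
          apply Finset.sum_le_sum
          intro j hj
          rw [norm_mul, norm_prod]
          have hjsum : ∑ l, j l = n - k := Finset.Nat.mem_antidiagonalTuple.mp hj
          calc ‖m k‖ * ∏ l : Fin (k + 1), ‖σ (j l)‖
              ≤ R ^ k * ∏ l : Fin (k + 1), S ^ (j l) := by
                apply mul_le_mul (hm k)
                · exact Finset.prod_le_prod (fun l _ => norm_nonneg _)
                    (fun l _ => hσ (j l))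
                · exact Finset.prod_nonneg fun l _ => norm_nonneg _
                · exact pow_nonneg hR k
            _ = R ^ k * S ^ (n - k) := by
                rw [Finset.prod_pow_eq_pow_sum, hjsum]
      _ = (n.choose k : ℝ) * (R ^ k * S ^ (n - k)) := by
          rw [Finset.sum_const, card_antidiagonalTuple, nsmul_eq_mul]
          congr 2
          rw [Nat.sub_add_cancel (Nat.lt_succ_iff.mp hk)]
  calc ‖monConv m σ n‖
      ≤ ∑ k ∈ Finset.range (n + 1), ‖∑ j ∈ Finset.Nat.antidiagonalTuple (k + 1) (n - k),
          m k * ∏ l : Fin (k + 1), σ (j l)‖ := norm_sum_le _ _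
    _ ≤ ∑ k ∈ Finset.range (n + 1), (n.choose k : ℝ) * (R ^ k * S ^ (n - k)) :=
        Finset.sum_le_sum key
    _ = (R + S) ^ n := by
        rw [add_pow]
        apply Finset.sum_congr rfl
        intro k _
        ring

/-- Lemma 3.3: if `m₀ = 1` and `|mₙ| ≤ Rⁿ` for all `n`, then the `N`-fold monotone
convolution power satisfies `|mₙ(μ^{▷N})| ≤ (N R)ⁿ` for all `n` and `N ≥ 1`. -/
theorem monPow_moment_bound (m : ℕ → ℂ) (R : ℝ) (hR : 0 ≤ R)
    (hm0 : m 0 = 1) (hm : ∀ n : ℕ, ‖m n‖ ≤ R ^ n) :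
    ∀ N : ℕ, 1 ≤ N → ∀ n : ℕ,
      ‖monPow m N n‖ ≤ ((N : ℝ) * R) ^ n := by
  have main : ∀ N : ℕ, ∀ n : ℕ, ‖monPow m N n‖ ≤ ((N : ℝ) * R) ^ n := by
    intro N
    induction N with
    | zero =>
      intro n
      cases n with
      | zero => simp [monPow]
      | succ n => simp [monPow, pow_succ]
    | succ N ih =>
      intro n
      have hNR : (0 : ℝ) ≤ (N : ℝ) * R := mul_nonneg (Nat.cast_nonneg N) hR
      have hb := monConv_bound m (monPow m N) R ((N : ℝ) * R) hR hNR hm ih n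
      have heq : monPow m (N + 1) n = monConv m (monPow m N) n := rfl
      rw [heq]
      calc ‖monConv m (monPow m N) n‖ ≤ (R + (N : ℝ) * R) ^ n := hb
        _ = (((N + 1 : ℕ) : ℝ) * R) ^ n := by push_cast; ring_nf
  intro N _ n
  exact main N n
end
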